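/- Let f : T^n → ℝ be Lipschitz continuous on the n-torus and let ω ∈ ℝ^n be non-resonant, i.e. ω·s ≠ 0 for every nonzero integer vector s ∈ ℤ^n. Then for every δ > 0 there exists T₀ > 0 such that for all T ≥ T₀, all continuous g : T^n → ℝ with sup |g - f| ≤ δ/3, and all x₀ ∈ T^n, one has |(1/T) ∫₀^T g(x₀ + ωt) dt - ∫_{T^n} g dμ| ≤ δ, where μ is the normalized Haar measure on T^n. -/

import Mathlib

open MeasureTheory Filter

instance : IsProbabilityMeasure (volume : Measure (AddCircle (1:ℝ))) :=
  ⟨by rw [AddCircle.measure_univ]; norm_num⟩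

noncomputable section WeylAux

open Complex Real Submodule

variable {n : ℕ}

/-- The character on the `n`-torus associated to an integer vector `s`. -/
def wchar (n : ℕ) (s : Fin n → ℤ) : C(Fin n → AddCircle (1:ℝ), ℂ) :=
  ∏ i, (fourier (s i)).comp ⟨fun x => x i, continuous_apply i⟩

lemma wchar_apply (s : Fin n → ℤ) (x : Fin n → AddCircle (1:ℝ)) :
    wchar n s x = ∏ i, fourier (s i) (x i) := by
  simp [wchar]

lemma wchar_zero (n : ℕ) : wchar n 0 = 1 := by
  ext x; simp [wchar_apply, fourier_zero]

lemma wchar_mul (s t : Fin n → ℤ) : wchar n s * wchar n t = wchar n (s + t) := by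
  ext x
  simp only [ContinuousMap.mul_apply, wchar_apply, ← Finset.prod_mul_distrib, Pi.add_apply,
    fourier_add]

lemma star_wchar (s : Fin n → ℤ) : star (wchar n s) = wchar n (-s) := by
  ext x
  simp only [ContinuousMap.star_apply, wchar_apply, star_prod, Pi.neg_apply]
  refine Finset.prod_congr rfl fun i _ => ?_
  rw [fourier_neg, starRingEnd_apply]

lemma abs_wchar (s : Fin n → ℤ) (x : Fin n → AddCircle (1:ℝ)) :
    ‖wchar n s x‖ = 1 := by
  rw [wchar_apply]
  rw [norm_prod]
  refine Finset.prod_eq_one fun i _ => ?_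
  rw [fourier_apply, Circle.norm_coe]

lemma fourier_pt_add {k : ℤ} (x y : AddCircle (1:ℝ)) :
    fourier k (x + y) = fourier k x * fourier k y := by
  simp only [fourier_apply, smul_add, AddCircle.toCircle_add, Circle.coe_mul]

lemma integral_fourier_unit (k : ℤ) :
    (∫ y : AddCircle (1:ℝ), fourier k y) = if k = 0 then 1 else 0 := by
  by_cases hk : k = 0
  · subst hk
    simp only [fourier_zero, if_true]
    simp
  · rw [if_neg hk, ← AddCircle.integral_preimage 1 0 (fun y => fourier k y)]
    have hptr : ∀ x : ℝ, fourier k (x : AddCircle (1:ℝ)) =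
        Complex.exp ((2 * π * I * k) * x) := by
      intro x; rw [fourier_coe_apply]; push_cast; ring_nf
    simp only [hptr]
    have hc : (2 * ↑π * I * (k:ℂ)) ≠ 0 := by
      simp [Complex.I_ne_zero, Real.pi_ne_zero, hk]
    rw [← intervalIntegral.integral_of_le (by norm_num : (0:ℝ) ≤ 0 + 1),
      integral_exp_mul_complex hc]
    have h1 : (2 * ↑π * I * (k:ℂ)) * (((0:ℝ) + 1 : ℝ):ℂ) = (k:ℂ) * (2 * ↑π * I) := by
      push_cast; ring
    have h2 : (2 * ↑π * I * (k:ℂ)) * (((0:ℝ):ℝ):ℂ) = 0 := by push_cast; ring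
    rw [h1, h2, Complex.exp_int_mul_two_pi_mul_I, Complex.exp_zero, sub_self, zero_div]

lemma integral_wchar (s : Fin n → ℤ) :
    (∫ x : Fin n → AddCircle (1:ℝ), wchar n s x) = if s = 0 then 1 else 0 := by
  have : (∫ x : Fin n → AddCircle (1:ℝ), wchar n s x)
      = ∏ i, ∫ y : AddCircle (1:ℝ), fourier (s i) y := by
    rw [← MeasureTheory.integral_fintype_prod_eq_prod (fun i y => fourier (s i) y)]
    simp_rw [wchar_apply]
    rfl
  rw [this]
  simp_rw [integral_fourier_unit]
  by_cases hs : s = 0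
  · subst hs; simp
  · rw [if_neg hs]
    obtain ⟨i, hi⟩ : ∃ i, s i ≠ 0 := by
      by_contra h; push_neg at h; exact hs (funext h)
    exact Finset.prod_eq_zero (Finset.mem_univ i) (by rw [if_neg hi])

lemma wchar_flow (s : Fin n → ℤ) (ω : Fin n → ℝ) (x₀ : Fin n → AddCircle (1:ℝ)) (t : ℝ) :
    wchar n s (fun i => x₀ i + ((ω i * t : ℝ) : AddCircle (1:ℝ)))
      = wchar n s x₀ * Complex.exp ((2 * π * (∑ i, (s i : ℝ) * ω i) * I) * t) := by
  rw [wchar_apply, wchar_apply]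
  simp_rw [fourier_pt_add]
  rw [Finset.prod_mul_distrib]
  congr 1
  have hpt : ∀ i, fourier (s i) (((ω i * t : ℝ)) : AddCircle (1:ℝ))
      = Complex.exp ((s i : ℂ) * (ω i : ℂ) * t * (2 * π * I)) := by
    intro i; rw [fourier_coe_apply]; push_cast; ring_nf
  simp_rw [hpt, ← Complex.exp_sum]
  congr 1
  push_cast
  rw [show ((2:ℂ) * ↑π * ∑ x : Fin n, (s x : ℂ) * ↑(ω x)) * I * ↑t
      = ∑ x : Fin n, ((s x : ℂ) * ↑(ω x)) * (2 * ↑π * I * ↑t) by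
    rw [Finset.mul_sum, Finset.sum_mul, Finset.sum_mul]
    exact Finset.sum_congr rfl fun i _ => by ring]
  exact Finset.sum_congr rfl fun i _ => by ring

lemma osc_bound {a : ℝ} (ha : a ≠ 0) (T : ℝ) :
    ‖∫ t in (0:ℝ)..T, Complex.exp ((2 * π * a * I) * t)‖ ≤ 1 / (π * |a|) := by
  have hπ : 0 < π := Real.pi_pos
  have hc : (2 * (π:ℂ) * a * I) ≠ 0 := by
    simp [Complex.I_ne_zero, Real.pi_ne_zero, ha]
  rw [integral_exp_mul_complex hc]
  have habs : ∀ r : ℝ, ‖Complex.exp ((2 * (π:ℂ) * a * I) * r)‖ = 1 := by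
    intro r
    have : (2 * (π:ℂ) * a * I) * r = ((2 * π * a * r : ℝ) : ℂ) * I := by push_cast; ring
    rw [this, Complex.norm_exp_ofReal_mul_I]
  rw [norm_div]
  have hnum : ‖Complex.exp ((2 * (π:ℂ) * a * I) * (T:ℂ))
      - Complex.exp ((2 * (π:ℂ) * a * I) * ((0:ℝ):ℂ))‖ ≤ 2 := by
    refine (norm_sub_le _ _).trans ?_
    rw [habs T, habs 0]
    norm_num
  have hden : ‖(2 * (π:ℂ) * a * I)‖ = 2 * π * |a| := by
    simp [map_mul, Complex.norm_I, Complex.norm_real, abs_of_pos hπ, abs_two]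
  rw [hden]
  have hd : 0 < 2 * π * |a| := by positivity
  calc ‖Complex.exp ((2 * (π:ℂ) * a * I) * (T:ℂ))
        - Complex.exp ((2 * (π:ℂ) * a * I) * ((0:ℝ):ℂ))‖ / (2 * π * |a|)
      ≤ 2 / (2 * π * |a|) := by gcongr
    _ = 1 / (π * |a|) := by field_simp

/-- The star subalgebra generated by the characters. -/
def wSubalg (n : ℕ) : StarSubalgebra ℂ C(Fin n → AddCircle (1:ℝ), ℂ) where
  toSubalgebra := Algebra.adjoin ℂ (Set.range (wchar n))
  star_mem' := by
    intro a ha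
    have hle : Algebra.adjoin ℂ (Set.range (wchar n)) ≤
        star (Algebra.adjoin ℂ (Set.range (wchar n))) := by
      refine Algebra.adjoin_le ?_
      rintro - ⟨s, rfl⟩
      refine Subalgebra.mem_star_iff _ _ |>.mpr ?_
      have : star (wchar n s) ∈ Algebra.adjoin ℂ (Set.range (wchar n)) := by
        rw [star_wchar]; exact Algebra.subset_adjoin ⟨-s, rfl⟩
      simpa using this
    simpa using hle ha

lemma wSubalg_sep (n : ℕ) : (wSubalg n).SeparatesPoints := by
  intro x y hxy
  obtain ⟨i, hi⟩ : ∃ i, x i ≠ y i := by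
    by_contra h; push_neg at h; exact hxy (funext h)
  refine ⟨_, ⟨wchar n (Pi.single i 1), Algebra.subset_adjoin ⟨_, rfl⟩, rfl⟩, ?_⟩
  have hval : ∀ z : Fin n → AddCircle (1:ℝ),
      wchar n (Pi.single i 1) z = (AddCircle.toCircle (z i) : ℂ) := by
    intro z
    rw [wchar_apply, Fintype.prod_eq_single i (fun j hj => by
      simp [Pi.single_eq_of_ne hj, fourier_zero])]
    rw [Pi.single_eq_same, fourier_one]
  dsimp only
  rw [hval, hval]
  intro h
  exact hi (AddCircle.injective_toCircle one_ne_zero (Subtype.coe_injective h))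

lemma exists_wchar_approx (n : ℕ) (F : C(Fin n → AddCircle (1:ℝ), ℂ)) {ε : ℝ} (hε : 0 < ε) :
    ∃ c : (Fin n → ℤ) →₀ ℂ, ‖F - c.sum fun s a => a • wchar n s‖ < ε := by
  have hA : (wSubalg n).topologicalClosure = ⊤ :=
    ContinuousMap.starSubalgebra_topologicalClosure_eq_top_of_separatesPoints _ (wSubalg_sep n)
  have hmem : F ∈ closure ((wSubalg n : Set C(Fin n → AddCircle (1:ℝ), ℂ))) := by
    have : F ∈ (wSubalg n).topologicalClosure := by rw [hA]; trivial
    exact this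
  obtain ⟨p, hpA, hp⟩ := Metric.mem_closure_iff.mp hmem ε hε
  have hspan : p ∈ span ℂ (Set.range (wchar n)) := by
    have hsub : ↑(Submonoid.closure (Set.range (wchar n)))
        ⊆ (span ℂ (Set.range (wchar n)) : Set C(Fin n → AddCircle (1:ℝ), ℂ)) := by
      refine Set.Subset.trans ?_ Submodule.subset_span
      intro q hq
      refine Submonoid.closure_induction (fun r hr => hr) ⟨0, ?_⟩ ?_ hq
      · rw [wchar_zero n]
      · rintro - - - - ⟨s, rfl⟩ ⟨t, rfl⟩
        exact ⟨s + t, (wchar_mul s t).symm⟩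
    have heq := Algebra.adjoin_eq_span_of_subset (R := ℂ) hsub
    have hp' : p ∈ Subalgebra.toSubmodule (Algebra.adjoin ℂ (Set.range (wchar n))) := hpA
    rw [heq] at hp'
    exact hp'
  obtain ⟨c, hc⟩ := Finsupp.mem_span_range_iff_exists_finsupp.mp hspan
  refine ⟨c, ?_⟩
  rw [hc, ← dist_eq_norm]
  exact hp

end WeylAux

open Complex Real in
theorem weyl_uniform_perturbed (n : ℕ) (f : (Fin n → AddCircle (1:ℝ)) → ℝ)
    (K : NNReal) (hf : LipschitzWith K f)
    (ω : Fin n → ℝ)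
    (hω : ∀ s : Fin n → ℤ, s ≠ 0 → (∑ i, (s i : ℝ) * ω i) ≠ 0)
    (δ : ℝ) (hδ : 0 < δ) :
    ∃ T₀ : ℝ, 0 < T₀ ∧ ∀ T : ℝ, T₀ ≤ T →
      ∀ g : (Fin n → AddCircle (1:ℝ)) → ℝ, Continuous g →
        (∀ x, |g x - f x| ≤ δ / 3) →
        ∀ x₀ : Fin n → AddCircle (1:ℝ),
          |(1 / T) * (∫ t in (0:ℝ)..T, g (fun i => x₀ i + ((ω i * t : ℝ) : AddCircle (1:ℝ))))
            - ∫ x, g x| ≤ δ := by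
  classical
  have hπ : (0:ℝ) < π := Real.pi_pos
  have hfc : Continuous f := hf.continuous
  set F : C(Fin n → AddCircle (1:ℝ), ℂ) := ⟨fun x => (f x : ℂ), by fun_prop⟩ with hFdef
  obtain ⟨c, hc⟩ := exists_wchar_approx n F (show (0:ℝ) < δ/12 by linarith)
  set p : C(Fin n → AddCircle (1:ℝ), ℂ) := c.sum fun s a => a • wchar n s with hpdef
  set av : (Fin n → ℤ) → ℝ := fun s => ∑ i, (s i : ℝ) * ω i with havdef
  set C0 : ℝ := ∑ s ∈ c.support.erase 0, ‖c s‖ * (1 / (π * |av s|)) with hC0def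
  have hC0nn : 0 ≤ C0 :=
    Finset.sum_nonneg fun s hs => by positivity
  refine ⟨max 1 (6 * C0 / δ), lt_of_lt_of_le one_pos (le_max_left _ _), ?_⟩
  intro T hT g hg hgf x₀
  have hT1 : (1:ℝ) ≤ T := le_trans (le_max_left _ _) hT
  have hT0 : (0:ℝ) < T := lt_of_lt_of_le one_pos hT1
  have hT6 : 6 * C0 / δ ≤ T := le_trans (le_max_right _ _) hT
  have hCT : C0 / T ≤ δ / 6 := by
    rw [div_le_div_iff₀ hT0 (by norm_num)]
    rw [div_le_iff₀ hδ] at hT6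
    nlinarith
  set φ : ℝ → (Fin n → AddCircle (1:ℝ)) :=
    fun t => fun i => x₀ i + ((ω i * t : ℝ) : AddCircle (1:ℝ)) with hφdef
  have hφc : Continuous φ := by
    refine continuous_pi fun i => continuous_const.add ?_
    exact (AddCircle.continuous_mk' _).comp (continuous_const.mul continuous_id)
  have hFp : ∀ x, ‖F x - p x‖ ≤ δ/12 := by
    intro x
    have h1 : F x - p x = (F - p) x := by simp
    rw [h1]
    exact le_trans ((F - p).norm_coe_le_norm x) hc.le
  -- integrability
  have intX : ∀ (h : (Fin n → AddCircle (1:ℝ)) → ℂ), Continuous h → Integrable h :=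
    fun h hh => hh.integrable_of_hasCompactSupport (HasCompactSupport.of_compactSpace h)
  have iG : IntervalIntegrable (fun t => ((g (φ t) : ℂ))) volume 0 T :=
    (Complex.continuous_ofReal.comp (hg.comp hφc)).intervalIntegrable _ _
  have iF : IntervalIntegrable (fun t => ((f (φ t) : ℂ))) volume 0 T :=
    (Complex.continuous_ofReal.comp (hfc.comp hφc)).intervalIntegrable _ _
  have ip : IntervalIntegrable (fun t => p (φ t)) volume 0 T :=
    (p.continuous.comp hφc).intervalIntegrable _ _
  -- e1
  have e1 : ‖(1/T:ℂ) * (∫ t in (0:ℝ)..T, ((g (φ t) : ℂ)))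
      - (1/T:ℂ) * (∫ t in (0:ℝ)..T, ((f (φ t) : ℂ)))‖ ≤ δ/3 := by
    rw [← mul_sub, ← intervalIntegral.integral_sub iG iF, norm_mul]
    have hb : ‖∫ t in (0:ℝ)..T, (((g (φ t) : ℂ)) - ((f (φ t) : ℂ)))‖ ≤ (δ/3) * |T - 0| := by
      refine intervalIntegral.norm_integral_le_of_norm_le_const fun x hx => ?_
      rw [show ((g (φ x) : ℂ)) - ((f (φ x) : ℂ)) = ((g (φ x) - f (φ x) : ℝ) : ℂ) by push_cast; ring]
      rw [Complex.norm_real, Real.norm_eq_abs]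
      exact hgf (φ x)
    have hn : ‖(1/T : ℂ)‖ = 1/T := by
      rw [show ((1:ℂ)/T) = ((1/T : ℝ) : ℂ) by push_cast; ring, Complex.norm_real,
        Real.norm_eq_abs, abs_of_pos (by positivity)]
    rw [hn]
    calc (1/T) * ‖∫ t in (0:ℝ)..T, (((g (φ t) : ℂ)) - ((f (φ t) : ℂ)))‖
        ≤ (1/T) * ((δ/3) * |T - 0|) := by
          refine mul_le_mul_of_nonneg_left hb (by positivity)
      _ = δ/3 := by
          rw [sub_zero, abs_of_pos hT0]; field_simp
  -- e2
  have e2 : ‖(1/T:ℂ) * (∫ t in (0:ℝ)..T, ((f (φ t) : ℂ)))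
      - (1/T:ℂ) * (∫ t in (0:ℝ)..T, p (φ t))‖ ≤ δ/12 := by
    rw [← mul_sub, ← intervalIntegral.integral_sub iF ip, norm_mul]
    have hb : ‖∫ t in (0:ℝ)..T, (((f (φ t) : ℂ)) - p (φ t))‖ ≤ (δ/12) * |T - 0| := by
      refine intervalIntegral.norm_integral_le_of_norm_le_const fun x hx => ?_
      exact hFp (φ x)
    have hn : ‖(1/T : ℂ)‖ = 1/T := by
      rw [show ((1:ℂ)/T) = ((1/T : ℝ) : ℂ) by push_cast; ring, Complex.norm_real,
        Real.norm_eq_abs, abs_of_pos (by positivity)]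
    rw [hn]
    calc (1/T) * ‖∫ t in (0:ℝ)..T, (((f (φ t) : ℂ)) - p (φ t))‖
        ≤ (1/T) * ((δ/12) * |T - 0|) := by
          refine mul_le_mul_of_nonneg_left hb (by positivity)
      _ = δ/12 := by rw [sub_zero, abs_of_pos hT0]; field_simp
  -- pointwise expansion of p
  have hpx : ∀ x, p x = ∑ s ∈ c.support, c s * wchar n s x := by
    intro x
    rw [hpdef, Finsupp.sum]
    simp
  -- e3
  have e3 : ‖(1/T:ℂ) * (∫ t in (0:ℝ)..T, p (φ t)) - ∫ x, p x‖ ≤ C0 / T := by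
    have hIp : (∫ t in (0:ℝ)..T, p (φ t))
        = ∑ s ∈ c.support, c s * ∫ t in (0:ℝ)..T, wchar n s (φ t) := by
      simp_rw [hpx]
      rw [intervalIntegral.integral_finset_sum]
      · exact Finset.sum_congr rfl fun s _ => intervalIntegral.integral_const_mul _ _
      · intro s hs
        exact (continuous_const.mul ((wchar n s).continuous.comp hφc)).intervalIntegrable _ _
    have hQ : (∫ x, p x) = ∑ s ∈ c.support, c s * (if s = 0 then 1 else 0) := by
      simp_rw [hpx]
      rw [integral_finset_sum]
      · exact Finset.sum_congr rfl fun s _ => by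
          rw [integral_const_mul, integral_wchar]
      · intro s hs
        exact (intX _ ((wchar n s).continuous)).const_mul _
    rw [hIp, hQ, Finset.mul_sum, ← Finset.sum_sub_distrib]
    have hterm : ∀ s ∈ c.support,
        ‖(1/T:ℂ) * (c s * ∫ t in (0:ℝ)..T, wchar n s (φ t)) - c s * (if s = 0 then 1 else 0)‖
          ≤ (if s = 0 then 0 else ‖c s‖ * (1 / (π * |av s|)) / T) := by
      intro s hs
      by_cases h0 : s = 0
      · subst h0
        have h1 : ∀ t : ℝ, wchar n (0 : Fin n → ℤ) (φ t) = 1 := by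
          intro t; rw [wchar_zero]; rfl
        have hint : (∫ t in (0:ℝ)..T, wchar n (0 : Fin n → ℤ) (φ t)) = (T:ℂ) := by
          simp_rw [h1]
          rw [intervalIntegral.integral_const]
          simp
        rw [hint, if_pos rfl, if_pos rfl]
        have hTne : (T:ℂ) ≠ 0 := Complex.ofReal_ne_zero.mpr hT0.ne'
        rw [show (1/T:ℂ) * (c 0 * (T:ℂ)) - c 0 * 1 = c 0 * ((1/T:ℂ) * (T:ℂ) - 1) by ring,
          one_div, inv_mul_cancel₀ hTne]
        simp
      · rw [if_neg h0, if_neg h0]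
        have hflow : ∀ t : ℝ, wchar n s (φ t)
            = wchar n s x₀ * Complex.exp ((2 * π * av s * I) * t) := fun t =>
          wchar_flow s ω x₀ t
        simp_rw [hflow]
        rw [intervalIntegral.integral_const_mul]
        rw [mul_zero, sub_zero]
        rw [show (1/T:ℂ) * (c s * (wchar n s x₀ * ∫ t in (0:ℝ)..T,
            Complex.exp ((2 * π * av s * I) * t)))
          = c s * wchar n s x₀ * (1/T:ℂ) * ∫ t in (0:ℝ)..T,
            Complex.exp ((2 * π * av s * I) * t) by ring]
        rw [norm_mul, norm_mul, norm_mul, abs_wchar]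
        have hosc := osc_bound (hω s h0) T
        have hn : ‖(1/T : ℂ)‖ = 1/T := by
          rw [show ((1:ℂ)/T) = ((1/T : ℝ) : ℂ) by push_cast; ring, Complex.norm_real,
            Real.norm_eq_abs, abs_of_pos (by positivity)]
        rw [hn, mul_one]
        calc ‖c s‖ * (1/T) * ‖∫ t in (0:ℝ)..T, Complex.exp ((2 * π * av s * I) * t)‖
            ≤ ‖c s‖ * (1/T) * (1 / (π * |av s|)) := by
              refine mul_le_mul_of_nonneg_left hosc (by positivity)
          _ = ‖c s‖ * (1 / (π * |av s|)) / T := by ring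
    refine le_trans (norm_sum_le _ _) ?_
    refine le_trans (Finset.sum_le_sum hterm) ?_
    have hsum : ∑ s ∈ c.support, (if s = 0 then 0 else ‖c s‖ * (1 / (π * |av s|)) / T)
        = ∑ s ∈ c.support.erase 0, ‖c s‖ * (1 / (π * |av s|)) / T := by
      have herase := Finset.sum_erase (s := c.support)
        (f := fun s => if s = 0 then (0:ℝ) else ‖c s‖ * (1 / (π * |av s|)) / T) (a := 0)
        (by simp)
      rw [← herase]
      exact Finset.sum_congr rfl fun s hs => if_neg (Finset.mem_erase.mp hs).1
    rw [hsum, hC0def, Finset.sum_div]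
  -- e4
  have e4 : ‖(∫ x, p x) - ∫ x, ((f x : ℂ))‖ ≤ δ/12 := by
    rw [← integral_sub (intX _ p.continuous) (intX (fun x => ((f x : ℂ))) (by fun_prop))]
    have := norm_integral_le_of_norm_le_const (μ := volume)
      (f := fun x => p x - ((f x : ℂ))) (C := δ/12)
      (ae_of_all _ fun x => by rw [norm_sub_rev]; exact hFp x)
    simpa using this
  -- e5
  have e5 : ‖(∫ x, ((f x : ℂ))) - ∫ x, ((g x : ℂ))‖ ≤ δ/3 := by
    rw [← integral_sub (intX (fun x => ((f x : ℂ))) (by fun_prop))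
      (intX (fun x => ((g x : ℂ))) (by fun_prop))]
    have := norm_integral_le_of_norm_le_const (μ := volume)
      (f := fun x => ((f x : ℂ)) - ((g x : ℂ))) (C := δ/3)
      (ae_of_all _ fun x => by
        show ‖((f x : ℂ)) - ((g x : ℂ))‖ ≤ δ/3
        rw [show ((f x : ℂ)) - ((g x : ℂ)) = ((f x - g x : ℝ) : ℂ) by push_cast; ring,
          Complex.norm_real, Real.norm_eq_abs, abs_sub_comm]
        exact hgf x)
    simpa using this
  -- combine
  have key : ‖(1/T:ℂ) * (∫ t in (0:ℝ)..T, ((g (φ t) : ℂ))) - ∫ x, ((g x : ℂ))‖ ≤ δ := by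
    have tele : (1/T:ℂ) * (∫ t in (0:ℝ)..T, ((g (φ t) : ℂ))) - ∫ x, ((g x : ℂ))
        = ((1/T:ℂ) * (∫ t in (0:ℝ)..T, ((g (φ t) : ℂ)))
            - (1/T:ℂ) * (∫ t in (0:ℝ)..T, ((f (φ t) : ℂ))))
        + ((1/T:ℂ) * (∫ t in (0:ℝ)..T, ((f (φ t) : ℂ)))
            - (1/T:ℂ) * (∫ t in (0:ℝ)..T, p (φ t)))
        + ((1/T:ℂ) * (∫ t in (0:ℝ)..T, p (φ t)) - ∫ x, p x)
        + ((∫ x, p x) - ∫ x, ((f x : ℂ)))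
        + ((∫ x, ((f x : ℂ))) - ∫ x, ((g x : ℂ))) := by ring
    rw [tele]
    refine le_trans (norm_add_le _ _) ?_
    refine le_trans (add_le_add (norm_add_le _ _) e5) ?_
    refine le_trans (add_le_add (add_le_add (norm_add_le _ _) e4) le_rfl) ?_
    refine le_trans (add_le_add (add_le_add (add_le_add (norm_add_le _ _) e3) le_rfl) le_rfl) ?_
    refine le_trans (add_le_add (add_le_add (add_le_add (add_le_add e1 e2) le_rfl) le_rfl)
      le_rfl) ?_
    linarith
  -- convert to the real statement
  show |(1 / T) * (∫ t in (0:ℝ)..T, g (φ t)) - ∫ x, g x| ≤ δ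
  have cast1 : (∫ t in (0:ℝ)..T, ((g (φ t) : ℂ))) = (((∫ t in (0:ℝ)..T, g (φ t)) : ℝ) : ℂ) :=
    intervalIntegral.integral_ofReal
  have cast2 : (∫ x, ((g x : ℂ))) = (((∫ x, g x) : ℝ) : ℂ) := integral_ofReal
  have habs : |(1 / T) * (∫ t in (0:ℝ)..T, g (φ t)) - ∫ x, g x|
      = ‖(1/T:ℂ) * (∫ t in (0:ℝ)..T, ((g (φ t) : ℂ))) - ∫ x, ((g x : ℂ))‖ := by
    rw [cast1, cast2,
      show (1/T:ℂ) * (((∫ t in (0:ℝ)..T, g (φ t)) : ℝ) : ℂ) - (((∫ x, g x) : ℝ) : ℂ)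
        = (((1 / T) * (∫ t in (0:ℝ)..T, g (φ t)) - ∫ x, g x : ℝ) : ℂ) by push_cast; ring,
      Complex.norm_real, Real.norm_eq_abs]
  rw [habs]
  exact key
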